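/- Let T ⊆ ℝ² be a nonempty open connected set and w = (w₁, w₂) : T → ℝ² a C² vector field with sym Curl w = 0, i.e. ∂w₁/∂x₂ = 0, ∂w₂/∂x₁ = 0, and ∂w₁/∂x₁ = ∂w₂/∂x₂ almost everywhere (everywhere, by continuity) in T. Then there is a polynomial β of total degree at most 2 on T with (w₂, w₁) = ∇β; in particular w is an affine (degree ≤ 1) vector field on T. -/

import Mathlib

open Filter Metric Set

/-- A function with zero derivative on an open set is locally constant there. -/
lemma aux_locally_const {T : Set (ℝ × ℝ)} (hT : IsOpen T) {f : ℝ × ℝ → ℝ}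
    (hf : DifferentiableOn ℝ f T) (h0 : ∀ x ∈ T, fderiv ℝ f x = 0)
    {x : ℝ × ℝ} (hx : x ∈ T) : ∀ᶠ y in nhds x, f y = f x := by
  obtain ⟨ε, hε, hball⟩ := Metric.isOpen_iff.1 hT x hx
  filter_upwards [Metric.ball_mem_nhds x hε] with y hy
  exact (convex_ball x ε).is_const_of_fderivWithin_eq_zero
    (hf.mono hball) (fun z hz => by
      rw [fderivWithin_of_isOpen Metric.isOpen_ball hz]
      exact h0 z (hball hz)) hy (Metric.mem_ball_self hε)

/-- A function with zero derivative on an open preconnected set is constant there. -/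
lemma aux_const_on {T : Set (ℝ × ℝ)} (hT : IsOpen T) (hconn : IsPreconnected T)
    {f : ℝ × ℝ → ℝ} (hf : DifferentiableOn ℝ f T) (h0 : ∀ x ∈ T, fderiv ℝ f x = 0) :
    ∀ x ∈ T, ∀ y ∈ T, f y = f x := by
  intro x hx y hy
  set u : Set (ℝ × ℝ) := {z | z ∈ T ∧ f z = f x} with hu_def
  set v : Set (ℝ × ℝ) := {z | z ∈ T ∧ f z ≠ f x} with hv_def
  have hu : IsOpen u := by
    rw [isOpen_iff_mem_nhds]
    rintro z ⟨hzT, hz⟩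
    filter_upwards [aux_locally_const hT hf h0 hzT, hT.mem_nhds hzT] with a ha haT
    exact ⟨haT, ha.trans hz⟩
  have hv : IsOpen v := by
    rw [isOpen_iff_mem_nhds]
    rintro z ⟨hzT, hz⟩
    filter_upwards [aux_locally_const hT hf h0 hzT, hT.mem_nhds hzT] with a ha haT
    exact ⟨haT, ha ▸ hz⟩
  have hdisj : Disjoint u v := by
    rw [Set.disjoint_left]
    rintro a ⟨_, h1⟩ ⟨_, h2⟩
    exact h2 h1
  have hsub : T ⊆ u ∪ v := fun z hz => by
    by_cases h : f z = f x
    · exact Or.inl ⟨hz, h⟩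
    · exact Or.inr ⟨hz, h⟩
  have := hconn.subset_left_of_subset_union hu hv hdisj hsub ⟨x, hx, hx, rfl⟩
  exact (this hy).2

/-- Basis decomposition of a vector in `ℝ × ℝ`. -/
lemma aux_basis (v : ℝ × ℝ) : v = v.1 • ((1 : ℝ), (0 : ℝ)) + v.2 • ((0 : ℝ), (1 : ℝ)) := by
  ext <;> simp

theorem symCurl_zero_implies_affine (T : Set (ℝ × ℝ)) (hT : IsOpen T)
    (hconn : IsConnected T) (w₁ w₂ : ℝ × ℝ → ℝ)
    (hw₁ : ContDiffOn ℝ 2 w₁ T) (hw₂ : ContDiffOn ℝ 2 w₂ T)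
    (h12 : ∀ x ∈ T, fderiv ℝ w₁ x (0, 1) = 0)
    (h21 : ∀ x ∈ T, fderiv ℝ w₂ x (1, 0) = 0)
    (h11 : ∀ x ∈ T, fderiv ℝ w₁ x (1, 0) = fderiv ℝ w₂ x (0, 1)) :
    ∃ (β : ℝ × ℝ → ℝ) (c₀ c₁ c₂ c₁₁ c₁₂ c₂₂ : ℝ),
      (∀ x : ℝ × ℝ, β x = c₀ + c₁ * x.1 + c₂ * x.2
        + c₁₁ * x.1 ^ 2 + c₁₂ * x.1 * x.2 + c₂₂ * x.2 ^ 2) ∧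
      (∀ x ∈ T, w₂ x = c₁ + 2 * c₁₁ * x.1 + c₁₂ * x.2) ∧
      (∀ x ∈ T, w₁ x = c₂ + c₁₂ * x.1 + 2 * c₂₂ * x.2) := by
  obtain ⟨x₀, hx₀⟩ := hconn.nonempty
  have hpre : IsPreconnected T := hconn.isPreconnected
  have hdw₁ : ∀ x ∈ T, DifferentiableAt ℝ w₁ x := fun x hx =>
    (hw₁.differentiableOn (by norm_num)).differentiableAt (hT.mem_nhds hx)
  have hdw₂ : ∀ x ∈ T, DifferentiableAt ℝ w₂ x := fun x hx =>
    (hw₂.differentiableOn (by norm_num)).differentiableAt (hT.mem_nhds hx)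
  have hf₁ : ContDiffOn ℝ 1 (fderiv ℝ w₁) T := hw₁.fderiv_of_isOpen hT (by norm_num)
  have hf₂ : ContDiffOn ℝ 1 (fderiv ℝ w₂) T := hw₂.fderiv_of_isOpen hT (by norm_num)
  have hdf₁ : ∀ x ∈ T, DifferentiableAt ℝ (fderiv ℝ w₁) x := fun x hx =>
    (hf₁.differentiableOn one_ne_zero).differentiableAt (hT.mem_nhds hx)
  have hdf₂ : ∀ x ∈ T, DifferentiableAt ℝ (fderiv ℝ w₂) x := fun x hx =>
    (hf₂.differentiableOn one_ne_zero).differentiableAt (hT.mem_nhds hx)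
  set A : ℝ × ℝ → (ℝ × ℝ) →L[ℝ] (ℝ × ℝ) →L[ℝ] ℝ := fun x => fderiv ℝ (fderiv ℝ w₁) x with hA
  set B : ℝ × ℝ → (ℝ × ℝ) →L[ℝ] (ℝ × ℝ) →L[ℝ] ℝ := fun x => fderiv ℝ (fderiv ℝ w₂) x with hB
  have hsymA : ∀ x ∈ T, ∀ u v, A x u v = A x v u := fun x hx =>
    (hw₁.contDiffAt (hT.mem_nhds hx)).isSymmSndFDerivAt (by norm_num)
  have hsymB : ∀ x ∈ T, ∀ u v, B x u v = B x v u := fun x hx =>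
    (hw₂.contDiffAt (hT.mem_nhds hx)).isSymmSndFDerivAt (by norm_num)
  -- derivative of the evaluated derivative
  have happ : ∀ (f : ℝ × ℝ → ℝ), (∀ x ∈ T, DifferentiableAt ℝ (fderiv ℝ f) x) →
      ∀ (e : ℝ × ℝ), ∀ x ∈ T,
      fderiv ℝ (fun y => fderiv ℝ f y e) x = (fderiv ℝ (fderiv ℝ f) x).flip e := by
    intro f hdf e x hx
    have := fderiv_clm_apply (hdf x hx) (differentiableAt_const e)
    simpa using this
  -- ∂ᵥ ∂₂ w₁ = 0
  have hA2 : ∀ x ∈ T, ∀ v, A x v (0, 1) = 0 := by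
    intro x hx v
    have hev : (fun y => fderiv ℝ w₁ y ((0 : ℝ), (1 : ℝ))) =ᶠ[nhds x]
        (fun _ => (0 : ℝ)) := by
      filter_upwards [hT.mem_nhds hx] with y hy using h12 y hy
    have h1 : fderiv ℝ (fun y => fderiv ℝ w₁ y ((0 : ℝ), (1 : ℝ))) x = 0 := by
      rw [hev.fderiv_eq]; exact fderiv_const_apply 0
    have h2 := happ w₁ hdf₁ (0, 1) x hx
    have : (A x).flip (0, 1) = 0 := by rw [← h2, h1]
    exact congrFun (congrArg DFunLike.coe this) v
  -- ∂ᵥ ∂₁ w₂ = 0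
  have hB1 : ∀ x ∈ T, ∀ v, B x v (1, 0) = 0 := by
    intro x hx v
    have hev : (fun y => fderiv ℝ w₂ y ((1 : ℝ), (0 : ℝ))) =ᶠ[nhds x]
        (fun _ => (0 : ℝ)) := by
      filter_upwards [hT.mem_nhds hx] with y hy using h21 y hy
    have h1 : fderiv ℝ (fun y => fderiv ℝ w₂ y ((1 : ℝ), (0 : ℝ))) x = 0 := by
      rw [hev.fderiv_eq]; exact fderiv_const_apply 0
    have h2 := happ w₂ hdf₂ (1, 0) x hx
    have : (B x).flip (1, 0) = 0 := by rw [← h2, h1]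
    exact congrFun (congrArg DFunLike.coe this) v
  -- ∂ᵥ ∂₁ w₁ = ∂ᵥ ∂₂ w₂
  have hAB : ∀ x ∈ T, ∀ v, A x v (1, 0) = B x v (0, 1) := by
    intro x hx v
    have hev : (fun y => fderiv ℝ w₁ y ((1 : ℝ), (0 : ℝ))) =ᶠ[nhds x]
        (fun y => fderiv ℝ w₂ y ((0 : ℝ), (1 : ℝ))) := by
      filter_upwards [hT.mem_nhds hx] with y hy using h11 y hy
    have h1 : fderiv ℝ (fun y => fderiv ℝ w₁ y ((1 : ℝ), (0 : ℝ))) x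
        = fderiv ℝ (fun y => fderiv ℝ w₂ y ((0 : ℝ), (1 : ℝ))) x := hev.fderiv_eq
    have h2 := happ w₁ hdf₁ (1, 0) x hx
    have h3 := happ w₂ hdf₂ (0, 1) x hx
    have : (A x).flip (1, 0) = (B x).flip (0, 1) := by rw [← h2, ← h3, h1]
    exact congrFun (congrArg DFunLike.coe this) v
  -- the function g := ∂₁ w₁ is constant on T
  set g : ℝ × ℝ → ℝ := fun y => fderiv ℝ w₁ y (1, 0) with hgdef
  have hgdiff : DifferentiableOn ℝ g T := fun x hx =>
    ((hdf₁ x hx).clm_apply (differentiableAt_const _)).differentiableWithinAt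
  have hg0 : ∀ x ∈ T, fderiv ℝ g x = 0 := by
    intro x hx
    have h2 := happ w₁ hdf₁ (1, 0) x hx
    rw [show (fun y => fderiv ℝ w₁ y ((1 : ℝ), (0 : ℝ))) = g from rfl] at h2
    rw [h2]
    refine ContinuousLinearMap.ext fun v => ?_
    have hdecomp := aux_basis v
    have e1 : A x ((1 : ℝ), (0 : ℝ)) (1, 0) = 0 := by
      rw [hAB x hx (1, 0), hsymB x hx (1, 0) (0, 1), hB1 x hx (0, 1)]
    have e2 : A x ((0 : ℝ), (1 : ℝ)) (1, 0) = 0 := by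
      rw [← hsymA x hx (1, 0) (0, 1), hA2 x hx (1, 0)]
    calc (A x).flip (1, 0) v = A x v (1, 0) := rfl
      _ = A x (v.1 • ((1 : ℝ), (0 : ℝ)) + v.2 • ((0 : ℝ), (1 : ℝ))) (1, 0) := by
          rw [← hdecomp]
      _ = v.1 * A x ((1 : ℝ), (0 : ℝ)) (1, 0) + v.2 * A x ((0 : ℝ), (1 : ℝ)) (1, 0) := by
          simp only [map_add, map_smul, ContinuousLinearMap.add_apply,
            ContinuousLinearMap.coe_smul', Pi.smul_apply, smul_eq_mul]
      _ = 0 := by rw [e1, e2]; ring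
  set k : ℝ := g x₀ with hk
  have hgconst : ∀ x ∈ T, g x = k := aux_const_on hT hpre hgdiff hg0 x₀ hx₀
  -- w₁ - k x₁ is constant
  have hF₁ : ∀ x ∈ T, fderiv ℝ (fun y => w₁ y - k * y.1) x = 0 := by
    intro x hx
    have hfst : HasFDerivAt (fun y : ℝ × ℝ => y.1) (ContinuousLinearMap.fst ℝ ℝ ℝ) x :=
      (ContinuousLinearMap.fst ℝ ℝ ℝ).hasFDerivAt
    have h := (hdw₁ x hx).hasFDerivAt.sub (hfst.const_mul k)
    have hzero : fderiv ℝ w₁ x - k • ContinuousLinearMap.fst ℝ ℝ ℝ = 0 := by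
      refine ContinuousLinearMap.ext fun v => ?_
      have hdecomp := aux_basis v
      have e1 : fderiv ℝ w₁ x ((1 : ℝ), (0 : ℝ)) = k := hgconst x hx
      calc (fderiv ℝ w₁ x - k • ContinuousLinearMap.fst ℝ ℝ ℝ) v
          = fderiv ℝ w₁ x v - k * v.1 := by simp
        _ = fderiv ℝ w₁ x (v.1 • ((1 : ℝ), (0 : ℝ)) + v.2 • ((0 : ℝ), (1 : ℝ))) - k * v.1 := by
            rw [← hdecomp]
        _ = v.1 * fderiv ℝ w₁ x ((1 : ℝ), (0 : ℝ))
            + v.2 * fderiv ℝ w₁ x ((0 : ℝ), (1 : ℝ)) - k * v.1 := by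
            simp only [map_add, map_smul, smul_eq_mul]
        _ = 0 := by rw [e1, h12 x hx]; ring
    rw [hzero] at h
    exact h.fderiv
  have hF₁diff : DifferentiableOn ℝ (fun y => w₁ y - k * y.1) T := fun x hx =>
    ((hdw₁ x hx).sub ((differentiableAt_fst).const_mul k)).differentiableWithinAt
  have hw₁eq : ∀ x ∈ T, w₁ x - k * x.1 = w₁ x₀ - k * x₀.1 :=
    aux_const_on hT hpre hF₁diff hF₁ x₀ hx₀
  -- w₂ - k x₂ is constant
  have hF₂ : ∀ x ∈ T, fderiv ℝ (fun y => w₂ y - k * y.2) x = 0 := by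
    intro x hx
    have hsnd : HasFDerivAt (fun y : ℝ × ℝ => y.2) (ContinuousLinearMap.snd ℝ ℝ ℝ) x :=
      (ContinuousLinearMap.snd ℝ ℝ ℝ).hasFDerivAt
    have h := (hdw₂ x hx).hasFDerivAt.sub (hsnd.const_mul k)
    have hzero : fderiv ℝ w₂ x - k • ContinuousLinearMap.snd ℝ ℝ ℝ = 0 := by
      refine ContinuousLinearMap.ext fun v => ?_
      have hdecomp := aux_basis v
      have e1 : fderiv ℝ w₂ x ((0 : ℝ), (1 : ℝ)) = k := by
        rw [← h11 x hx]; exact hgconst x hx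
      calc (fderiv ℝ w₂ x - k • ContinuousLinearMap.snd ℝ ℝ ℝ) v
          = fderiv ℝ w₂ x v - k * v.2 := by simp
        _ = fderiv ℝ w₂ x (v.1 • ((1 : ℝ), (0 : ℝ)) + v.2 • ((0 : ℝ), (1 : ℝ))) - k * v.2 := by
            rw [← hdecomp]
        _ = v.1 * fderiv ℝ w₂ x ((1 : ℝ), (0 : ℝ))
            + v.2 * fderiv ℝ w₂ x ((0 : ℝ), (1 : ℝ)) - k * v.2 := by
            simp only [map_add, map_smul, smul_eq_mul]
        _ = 0 := by rw [e1, h21 x hx]; ring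
    rw [hzero] at h
    exact h.fderiv
  have hF₂diff : DifferentiableOn ℝ (fun y => w₂ y - k * y.2) T := fun x hx =>
    ((hdw₂ x hx).sub ((differentiableAt_snd).const_mul k)).differentiableWithinAt
  have hw₂eq : ∀ x ∈ T, w₂ x - k * x.2 = w₂ x₀ - k * x₀.2 :=
    aux_const_on hT hpre hF₂diff hF₂ x₀ hx₀
  -- assemble
  refine ⟨fun p => (w₂ x₀ - k * x₀.2) * p.1 + (w₁ x₀ - k * x₀.1) * p.2 + k * p.1 * p.2,
    0, w₂ x₀ - k * x₀.2, w₁ x₀ - k * x₀.1, 0, k, 0, fun x => by ring, ?_, ?_⟩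
  · intro x hx
    have := hw₂eq x hx
    ring_nf
    linarith
  · intro x hx
    have := hw₁eq x hx
    ring_nf
    linarith
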